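/- Let 1 < p < ∞, let w : ℤ → (0,∞) be a symmetric weight (w_{−k} = w_k for all k), and let c, d : ℤ → ℂ have finite multiplier norms N_{p,w}(c) and N_{p,w}(d) on ℓ^p(ℤ,w). Then for every n ∈ ℤ the series e(n) := ∑_{k∈ℤ} c(k) d(n−k) converges absolutely, and the sequence e satisfies N_{p,w}(e) ≤ N_{p,w}(c) · N_{p,w}(d). (The sequence e is the sequence of Fourier coefficients of the pointwise product of the two L^∞ symbols whose Fourier coefficients are c and d.) -/

import Mathlib

open scoped ENNReal
open Filter Topology

/-- The norm of `φ` in the weighted space `ℓ^r(ℤ,u)` (with value in `[0,∞]`). -/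
noncomputable def wNorm (r : ℝ) (u : ℤ → ℝ) (φ : ℤ → ℂ) : ℝ≥0∞ :=
  (∑' k : ℤ, ENNReal.ofReal (‖φ k‖ * u k) ^ r) ^ (1 / r)

/-- Convolution of a sequence `c : ℤ → ℂ` with a finitely supported `φ`. -/
noncomputable def conv (c : ℤ → ℂ) (φ : ℤ →₀ ℂ) : ℤ → ℂ :=
  fun j => ∑ k ∈ φ.support, c (j - k) * φ k

/-- The multiplier norm `N_{r,u}(c)` of a sequence `c : ℤ → ℂ` on `ℓ^r(ℤ,u)`. -/
noncomputable def multNorm (r : ℝ) (u : ℤ → ℝ) (c : ℤ → ℂ) : ℝ≥0∞ :=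
  ⨆ φ : {φ : ℤ →₀ ℂ // φ ≠ 0}, wNorm r u (conv c φ.1) / wNorm r u (φ.1 : ℤ → ℂ)

section Aux

variable {p : ℝ} {w : ℤ → ℝ}

lemma hpq (hp : 1 < p) : p.HolderConjugate (p/(p-1)) := by
  rw [Real.holderConjugate_iff]
  refine ⟨hp, ?_⟩
  have h1 : p ≠ 0 := ne_of_gt (lt_trans one_pos hp)
  have h2 : p - 1 ≠ 0 := sub_ne_zero.mpr (ne_of_gt hp)
  field_simp
  ring

lemma term_zero (hp : 1 < p) (u : ℤ → ℝ) {φ : ℤ → ℂ} {k : ℤ} (h : φ k = 0) :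
    ENNReal.ofReal (‖φ k‖ * u k) ^ p = 0 := by
  rw [h]
  simp [ENNReal.zero_rpow_of_pos (lt_trans one_pos hp)]

lemma tsum_restrict (hp : 1 < p) {φ : ℤ → ℂ} {F : Finset ℤ} (h : ∀ k ∉ F, φ k = 0) :
    ∑' k : ℤ, ENNReal.ofReal (‖φ k‖ * w k) ^ p
      = ∑ k ∈ F, ENNReal.ofReal (‖φ k‖ * w k) ^ p :=
  tsum_eq_sum (fun k hk => term_zero hp w (h k hk))

lemma wNorm_finsupp_eq (hp : 1 < p) (φ : ℤ →₀ ℂ) :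
    wNorm p w φ = (∑ k ∈ φ.support, ENNReal.ofReal (‖(φ:ℤ→ℂ) k‖ * w k) ^ p) ^ (1/p) := by
  unfold wNorm
  congr 1
  exact tsum_restrict hp (fun k hk => Finsupp.notMem_support_iff.mp hk)

lemma tsum_finsupp_ne_top (hp : 1 < p) (φ : ℤ →₀ ℂ) :
    ∑' k : ℤ, ENNReal.ofReal (‖(φ:ℤ→ℂ) k‖ * w k) ^ p ≠ ⊤ := by
  rw [tsum_restrict hp (fun k hk => Finsupp.notMem_support_iff.mp hk)]
  apply (ENNReal.sum_lt_top.mpr ?_).ne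
  intro k _
  exact ENNReal.rpow_lt_top_of_nonneg (le_of_lt (lt_trans one_pos hp)) ENNReal.ofReal_ne_top

lemma wNorm_finsupp_ne_top (hp : 1 < p) (φ : ℤ →₀ ℂ) : wNorm p w φ ≠ ⊤ :=
  ENNReal.rpow_ne_top_of_nonneg (by positivity) (tsum_finsupp_ne_top hp φ)

lemma wNorm_finsupp_pos (hp : 1 < p) (hw : ∀ k, 0 < w k) {φ : ℤ →₀ ℂ} (hφ : φ ≠ 0) :
    0 < wNorm p w φ := by
  obtain ⟨k, hk⟩ := Finsupp.ne_iff.mp hφ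
  simp only [Finsupp.coe_zero, Pi.zero_apply] at hk
  have h1 : (0:ℝ≥0∞) < ENNReal.ofReal (‖(φ:ℤ→ℂ) k‖ * w k) ^ p := by
    apply ENNReal.rpow_pos _ ENNReal.ofReal_ne_top
    rw [ENNReal.ofReal_pos]
    exact mul_pos (norm_pos_iff.mpr hk) (hw k)
  have h2 : (0:ℝ≥0∞) < ∑' k : ℤ, ENNReal.ofReal (‖(φ:ℤ→ℂ) k‖ * w k) ^ p :=
    lt_of_lt_of_le h1 (ENNReal.le_tsum k)
  exact ENNReal.rpow_pos h2 (tsum_finsupp_ne_top hp φ)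

/-- Fundamental bound. -/
lemma wNorm_conv_le (hp : 1 < p) (hw : ∀ k, 0 < w k) (c : ℤ → ℂ) (φ : ℤ →₀ ℂ) :
    wNorm p w (conv c φ) ≤ multNorm p w c * wNorm p w φ := by
  by_cases hφ : φ = 0
  · subst hφ
    have : conv c 0 = fun _ => (0:ℂ) := by
      funext j; simp [conv]
    rw [this]
    have : wNorm p w (fun _ => (0:ℂ)) = 0 := by
      unfold wNorm
      have hz : ∀ k : ℤ, ENNReal.ofReal (‖(0:ℂ)‖ * w k) ^ p = 0 := by
        intro k; simp [ENNReal.zero_rpow_of_pos (lt_trans one_pos hp)]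
      rw [tsum_eq_sum (s := ∅) (fun k _ => hz k)]
      rw [Finset.sum_empty, ENNReal.zero_rpow_of_pos (one_div_pos.mpr (lt_trans one_pos hp))]
    rw [this]; exact zero_le
  · have h := le_iSup (fun φ : {φ : ℤ →₀ ℂ // φ ≠ 0} =>
      wNorm p w (conv c φ.1) / wNorm p w (φ.1 : ℤ → ℂ)) ⟨φ, hφ⟩
    rw [show (⨆ φ : {φ : ℤ →₀ ℂ // φ ≠ 0},
      wNorm p w (conv c φ.1) / wNorm p w (φ.1 : ℤ → ℂ)) = multNorm p w c from rfl] at h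
    exact (ENNReal.div_le_iff_le_mul (Or.inl (wNorm_finsupp_pos hp hw hφ).ne')
      (Or.inl (wNorm_finsupp_ne_top hp φ))).mp h


lemma point_le (hp : 1 < p) (X : ℤ → ℂ) (n : ℤ) :
    ENNReal.ofReal (‖X n‖ * w n) ≤ wNorm p w X := by
  have hp0 : (0:ℝ) < p := lt_trans one_pos hp
  have h : ENNReal.ofReal (‖X n‖ * w n) ^ p ≤ ∑' k : ℤ, ENNReal.ofReal (‖X k‖ * w k) ^ p :=
    ENNReal.le_tsum n
  calc ENNReal.ofReal (‖X n‖ * w n)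
      = (ENNReal.ofReal (‖X n‖ * w n) ^ p) ^ (1/p) := by
        rw [← ENNReal.rpow_mul, mul_one_div_cancel hp0.ne', ENNReal.rpow_one]
    _ ≤ wNorm p w X := ENNReal.rpow_le_rpow h (by positivity)

lemma conv_eq_sum (c : ℤ → ℂ) (ψ : ℤ →₀ ℂ) {F : Finset ℤ} (h : ψ.support ⊆ F) (j : ℤ) :
    conv c ψ j = ∑ k ∈ F, c (j - k) * ψ k :=
  Finset.sum_subset h (fun k _ hk => by rw [Finsupp.notMem_support_iff.mp hk, mul_zero])

lemma key_real1 (q : ℝ) (hq : 1 < q) (a v : ℝ) (ha : 0 ≤ a) (hv : 0 < v) :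
    a ^ 2 * (a ^ (q-2) * v ^ (-q)) = (a / v) ^ q := by
  have hq0 : q ≠ 0 := ne_of_gt (lt_trans one_pos hq)
  rcases eq_or_lt_of_le ha with h | h
  · rw [← h, zero_div, Real.zero_rpow hq0]
    norm_num
  · rw [Real.div_rpow ha hv.le, Real.rpow_neg hv.le]
    have h2 : a ^ 2 * a ^ (q-2) = a ^ q := by
      rw [← Real.rpow_natCast a 2, ← Real.rpow_add h]
      norm_num
    rw [div_eq_mul_inv, ← h2]
    ring

lemma key_real2 (p q : ℝ) (hq : 1 < q) (h1 : (q-1)*p = q) (a v : ℝ) (ha : 0 ≤ a) (hv : 0 < v) :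
    ((a * (a ^ (q-2) * v ^ (-q))) * v) ^ p = (a / v) ^ q := by
  have hq0 : q ≠ 0 := ne_of_gt (lt_trans one_pos hq)
  have hq1 : q - 1 ≠ 0 := sub_ne_zero.mpr (ne_of_gt hq)
  have ha1 : a * a ^ (q-2) = a ^ (q-1) := by
    rcases eq_or_lt_of_le ha with h | h
    · rw [← h, Real.zero_rpow hq1, zero_mul]
    · nth_rewrite 1 [← Real.rpow_one a]
      rw [← Real.rpow_add h]
      congr 1; ring
  have hv1 : v ^ (-q) * v = v ^ (1-q) := by
    nth_rewrite 2 [← Real.rpow_one v]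
    rw [← Real.rpow_add hv]
    ring_nf
  have e1 : a * (a ^ (q-2) * v ^ (-q)) * v = a ^ (q-1) * v ^ (1-q) := by
    rw [← ha1, ← hv1]; ring
  rw [e1, Real.mul_rpow (Real.rpow_nonneg ha _) (Real.rpow_nonneg hv.le _),
    ← Real.rpow_mul ha, ← Real.rpow_mul hv.le, h1, Real.div_rpow ha hv.le,
    show (1-q)*p = -q by linarith [h1], Real.rpow_neg hv.le, div_eq_mul_inv]

lemma dual_bound (hp : 1 < p) (hw : ∀ k, 0 < w k) (c : ℤ → ℂ) (n : ℤ) :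
    ∑' k : ℤ, ENNReal.ofReal ((‖c (n - k)‖ / w k) ^ (p/(p-1)))
      ≤ (multNorm p w c / ENNReal.ofReal (w n)) ^ (p/(p-1)) := by
  classical
  set q : ℝ := p/(p-1) with hqdef
  have hcj : p.HolderConjugate q := hpq hp
  have hq : 1 < q := hcj.symm.lt
  have hq0 : (0:ℝ) < q := lt_trans one_pos hq
  have hp0 : (0:ℝ) < p := lt_trans one_pos hp
  have hqp : (q - 1) * p = q := by
    have h : q * (p - 1) = p := by
      rw [hqdef]; exact div_mul_cancel₀ p (sub_ne_zero.mpr hp.ne')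
    nlinarith
  rw [ENNReal.tsum_eq_iSup_sum]
  apply iSup_le
  intro F
  -- the test function
  set a : ℤ → ℝ := fun k => ‖c (n - k)‖ with hadef
  have ha : ∀ k, 0 ≤ a k := fun k => norm_nonneg _
  set t : ℤ → ℝ := fun k => (a k / w k) ^ q with htdef
  have ht : ∀ k, 0 ≤ t k := fun k => Real.rpow_nonneg (div_nonneg (ha k) (hw k).le) _
  set S : ℝ := ∑ k ∈ F, t k with hSdef
  have hS : 0 ≤ S := Finset.sum_nonneg (fun k _ => ht k)
  set ψ : ℤ →₀ ℂ := Finsupp.indicator F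
    (fun k _ => (starRingEnd ℂ) (c (n - k)) * ((a k ^ (q-2) * (w k) ^ (-q) : ℝ) : ℂ)) with hψdef
  have hψ0 : ∀ k ∉ F, ψ k = 0 := fun k hk => Finsupp.indicator_of_notMem hk _
  have hψsupp : ψ.support ⊆ F := fun k hk => by
    by_contra h
    exact Finsupp.notMem_support_iff.mpr (hψ0 k h) hk
  -- ‖ψ k‖ terms
  have hr : ∀ k, 0 ≤ a k ^ (q-2) * (w k) ^ (-q) :=
    fun k => mul_nonneg (Real.rpow_nonneg (ha k) _) (Real.rpow_nonneg (hw k).le _)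
  have hψval : ∀ k ∈ F, ψ k = (starRingEnd ℂ) (c (n - k)) * ((a k ^ (q-2) * (w k) ^ (-q) : ℝ) : ℂ) :=
    fun k hk => Finsupp.indicator_of_mem hk _
  have hterm : ∀ k ∈ F, ENNReal.ofReal (‖ψ k‖ * w k) ^ p = ENNReal.ofReal (t k) := by
    intro k hk
    rw [ENNReal.ofReal_rpow_of_nonneg (mul_nonneg (norm_nonneg _) (hw k).le) hp0.le]
    congr 1
    rw [hψval k hk, norm_mul, RingHomIsometric.norm_map, Complex.norm_real,
      Real.norm_of_nonneg (hr k)]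
    exact key_real2 p q hq hqp (a k) (w k) (ha k) (hw k)
  -- wNorm ψ
  have hwψ : wNorm p w ψ = ENNReal.ofReal S ^ (1/p) := by
    unfold wNorm
    rw [tsum_restrict hp (fun k hk => hψ0 k hk), Finset.sum_congr rfl hterm,
      ← ENNReal.ofReal_sum_of_nonneg (fun k _ => ht k)]
  -- value of conv c ψ at n
  have hconv : conv c ψ n = ((S:ℝ):ℂ) := by
    rw [conv_eq_sum c ψ hψsupp n, hSdef]
    push_cast
    apply Finset.sum_congr rfl
    intro k hk
    rw [hψval k hk, ← mul_assoc, Complex.mul_conj']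
    rw [show t k = a k ^ 2 * (a k ^ (q-2) * (w k) ^ (-q)) from
      (key_real1 q hq (a k) (w k) (ha k) (hw k)).symm]
    simp only [hadef]
    push_cast
    ring
  -- main chain
  have hpoint : ENNReal.ofReal S * ENNReal.ofReal (w n) ≤ multNorm p w c * ENNReal.ofReal S ^ (1/p) := by
    have h1 := point_le (w := w) hp (conv c ψ) n
    have h2 : ENNReal.ofReal (‖conv c ψ n‖ * w n) = ENNReal.ofReal S * ENNReal.ofReal (w n) := by
      rw [hconv, Complex.norm_real, Real.norm_of_nonneg hS, ENNReal.ofReal_mul hS]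
    calc ENNReal.ofReal S * ENNReal.ofReal (w n) = ENNReal.ofReal (‖conv c ψ n‖ * w n) := h2.symm
      _ ≤ wNorm p w (conv c ψ) := h1
      _ ≤ multNorm p w c * wNorm p w ψ := wNorm_conv_le hp hw c ψ
      _ = multNorm p w c * ENNReal.ofReal S ^ (1/p) := by rw [hwψ]
  -- conclude
  have hsum_eq : ∑ k ∈ F, ENNReal.ofReal ((‖c (n - k)‖ / w k) ^ q) = ENNReal.ofReal S := by
    rw [hSdef, ENNReal.ofReal_sum_of_nonneg (fun k _ => ht k)]
  rw [hsum_eq]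
  set x : ℝ≥0∞ := ENNReal.ofReal S with hxdef
  by_cases hx0 : x = 0
  · rw [hx0]; exact zero_le
  have hxt : x ≠ ⊤ := ENNReal.ofReal_ne_top
  have hsplit : x = x ^ (1/p) * x ^ (1/q) := by
    rw [← ENNReal.rpow_add _ _ hx0 hxt]
    rw [show 1/p + 1/q = 1 by rw [one_div, one_div]; exact hcj.inv_add_inv_eq_one]
    exact (ENNReal.rpow_one x).symm
  have hxp0 : x ^ (1/p) ≠ 0 := by
    simp [ENNReal.rpow_eq_zero_iff, hx0, hxt]
  have hxpt : x ^ (1/p) ≠ ⊤ := ENNReal.rpow_ne_top_of_nonneg (by positivity) hxt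
  have hwn0 : ENNReal.ofReal (w n) ≠ 0 := by
    simp [ENNReal.ofReal_eq_zero, not_le, hw n]
  have step1 : x ^ (1/p) * (x ^ (1/q) * ENNReal.ofReal (w n)) ≤ x ^ (1/p) * multNorm p w c := by
    calc x ^ (1/p) * (x ^ (1/q) * ENNReal.ofReal (w n))
        = x * ENNReal.ofReal (w n) := by rw [← mul_assoc, ← hsplit]
      _ ≤ multNorm p w c * x ^ (1/p) := hpoint
      _ = x ^ (1/p) * multNorm p w c := mul_comm _ _
  have step2 : x ^ (1/q) * ENNReal.ofReal (w n) ≤ multNorm p w c :=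
    (ENNReal.mul_le_mul_iff_right hxp0 hxpt).mp step1
  have step3 : x ^ (1/q) ≤ multNorm p w c / ENNReal.ofReal (w n) :=
    (ENNReal.le_div_iff_mul_le (Or.inl hwn0) (Or.inl ENNReal.ofReal_ne_top)).mpr step2
  calc x = (x ^ (1/q)) ^ q := by
        rw [← ENNReal.rpow_mul, one_div_mul_cancel hq0.ne', ENNReal.rpow_one]
    _ ≤ (multNorm p w c / ENNReal.ofReal (w n)) ^ q := ENNReal.rpow_le_rpow step3 hq0.le

lemma dual_summable (hp : 1 < p) (hw : ∀ k, 0 < w k) {c : ℤ → ℂ}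
    (hc : multNorm p w c ≠ ⊤) (n : ℤ) :
    Summable fun k : ℤ => (‖c (n - k)‖ / w k) ^ (p/(p-1)) := by
  have hq0 : (0:ℝ) < p/(p-1) := (hpq hp).symm.pos
  have hnt : ∑' k : ℤ, ENNReal.ofReal ((‖c (n - k)‖ / w k) ^ (p/(p-1))) ≠ ⊤ := by
    apply (lt_of_le_of_lt (dual_bound hp hw c n) _).ne
    apply ENNReal.rpow_lt_top_of_nonneg hq0.le
    exact (ENNReal.div_lt_top hc (by simp [ENNReal.ofReal_eq_zero, not_le, hw n])).ne
  have := ENNReal.summable_toReal hnt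
  refine this.congr (fun k => ?_)
  exact ENNReal.toReal_ofReal (Real.rpow_nonneg (div_nonneg (norm_nonneg _) (hw k).le) _)

lemma lp_summable (hp : 1 < p) (hw : ∀ k, 0 < w k) {c : ℤ → ℂ}
    (hc : multNorm p w c ≠ ⊤) :
    Summable fun k : ℤ => (‖c k‖ * w k) ^ p := by
  have hp0 : (0:ℝ) < p := lt_trans one_pos hp
  have h1 : conv c (Finsupp.single 0 1) = c := by
    funext j
    rw [conv, Finsupp.support_single_ne_zero 0 one_ne_zero,
      Finset.sum_singleton, Finsupp.single_eq_same, mul_one, sub_zero]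
  have h2 : wNorm p w c ≠ ⊤ := by
    rw [← h1]
    exact (lt_of_le_of_lt (wNorm_conv_le hp hw c _)
      (ENNReal.mul_lt_top hc.lt_top (wNorm_finsupp_ne_top hp _).lt_top)).ne
  have hnt : ∑' k : ℤ, ENNReal.ofReal (‖c k‖ * w k) ^ p ≠ ⊤ := by
    intro h
    rw [wNorm, h, ENNReal.top_rpow_of_pos (one_div_pos.mpr hp0)] at h2
    exact h2 rfl
  have := ENNReal.summable_toReal hnt
  refine this.congr (fun k => ?_)
  rw [ENNReal.ofReal_rpow_of_nonneg (mul_nonneg (norm_nonneg _) (hw k).le) hp0.le]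
  exact ENNReal.toReal_ofReal (Real.rpow_nonneg (mul_nonneg (norm_nonneg _) (hw k).le) _)

/-- Young / Hölder summability of products. -/
lemma summable_mul_young (hp : 1 < p) {a b : ℤ → ℝ} (ha : ∀ k, 0 ≤ a k) (hb : ∀ k, 0 ≤ b k)
    (hap : Summable fun k => a k ^ p) (hbq : Summable fun k => b k ^ (p/(p-1))) :
    Summable fun k => a k * b k := by
  have hcj : p.HolderConjugate (p/(p-1)) := hpq hp
  apply Summable.of_nonneg_of_le (fun k => mul_nonneg (ha k) (hb k))
    (fun k => ?_) ((hap.div_const p).add (hbq.div_const (p/(p-1))))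
  calc a k * b k ≤ |a k| ^ p / p + |b k| ^ (p/(p-1)) / (p/(p-1)) :=
        Real.young_inequality _ _ hcj
    _ = a k ^ p / p + b k ^ (p/(p-1)) / (p/(p-1)) := by
        rw [abs_of_nonneg (ha k), abs_of_nonneg (hb k)]

lemma part1 (hp : 1 < p) (hw : ∀ k, 0 < w k) {c d : ℤ → ℂ}
    (hc : multNorm p w c ≠ ⊤) (hd : multNorm p w d ≠ ⊤) (n : ℤ) :
    Summable fun k : ℤ => ‖c k * d (n - k)‖ := by
  have h := summable_mul_young hp (a := fun k => ‖c k‖ * w k) (b := fun k => ‖d (n - k)‖ / w k)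
    (fun k => mul_nonneg (norm_nonneg _) (hw k).le)
    (fun k => div_nonneg (norm_nonneg _) (hw k).le)
    (lp_summable hp hw hc) (dual_summable hp hw hd n)
  refine h.congr (fun k => ?_)
  show (‖c k‖ * w k) * (‖d (n - k)‖ / w k) = ‖c k * d (n - k)‖
  rw [div_eq_mul_inv, mul_mul_mul_comm, mul_inv_cancel₀ (hw k).ne', mul_one, ← norm_mul]

lemma summable_of_wNorm_ne_top (hp : 1 < p) (hw : ∀ k, 0 < w k) {X : ℤ → ℂ}
    (h2 : wNorm p w X ≠ ⊤) :
    Summable fun k : ℤ => (‖X k‖ * w k) ^ p := by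
  have hp0 : (0:ℝ) < p := lt_trans one_pos hp
  have hnt : ∑' k : ℤ, ENNReal.ofReal (‖X k‖ * w k) ^ p ≠ ⊤ := by
    intro h
    rw [wNorm, h, ENNReal.top_rpow_of_pos (one_div_pos.mpr hp0)] at h2
    exact h2 rfl
  have := ENNReal.summable_toReal hnt
  refine this.congr (fun k => ?_)
  rw [ENNReal.ofReal_rpow_of_nonneg (mul_nonneg (norm_nonneg _) (hw k).le) hp0.le]
  exact ENNReal.toReal_ofReal (Real.rpow_nonneg (mul_nonneg (norm_nonneg _) (hw k).le) _)

lemma summable_conv_point (hp : 1 < p) (hw : ∀ k, 0 < w k) {c : ℤ → ℂ}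
    (hc : multNorm p w c ≠ ⊤) {g : ℤ → ℂ}
    (hg : Summable fun m : ℤ => (‖g m‖ * w m) ^ p) (j : ℤ) :
    Summable fun m : ℤ => ‖c (j - m) * g m‖ := by
  have h := summable_mul_young hp (a := fun m => ‖g m‖ * w m) (b := fun m => ‖c (j - m)‖ / w m)
    (fun k => mul_nonneg (norm_nonneg _) (hw k).le)
    (fun k => div_nonneg (norm_nonneg _) (hw k).le)
    hg (dual_summable hp hw hc j)
  refine h.congr (fun k => ?_)
  show (‖g k‖ * w k) * (‖c (j - k)‖ / w k) = ‖c (j - k) * g k‖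
  rw [div_eq_mul_inv, mul_mul_mul_comm, mul_inv_cancel₀ (hw k).ne', mul_one, ← norm_mul,
    mul_comm]

lemma conv_e (hp : 1 < p) (hw : ∀ k, 0 < w k) {c d : ℤ → ℂ}
    (hc : multNorm p w c ≠ ⊤) (hd : multNorm p w d ≠ ⊤) (φ : ℤ →₀ ℂ) (j : ℤ) :
    conv (fun n => ∑' k : ℤ, c k * d (n - k)) φ j = ∑' m : ℤ, c (j - m) * conv d φ m := by
  have hsum1 : ∀ k : ℤ, Summable fun m : ℤ => c m * d (j - k - m) * φ k := by
    intro k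
    exact ((part1 hp hw hc hd (j - k)).of_norm).mul_right (φ k)
  calc conv (fun n => ∑' k : ℤ, c k * d (n - k)) φ j
      = ∑ k ∈ φ.support, (∑' m : ℤ, c m * d (j - k - m)) * φ k := rfl
    _ = ∑ k ∈ φ.support, ∑' m : ℤ, c m * d (j - k - m) * φ k := by
        apply Finset.sum_congr rfl
        intro k _
        exact (tsum_mul_right).symm
    _ = ∑' m : ℤ, ∑ k ∈ φ.support, c m * d (j - k - m) * φ k :=
        (Summable.tsum_finsetSum (fun k _ => hsum1 k)).symm
    _ = ∑' m : ℤ, c m * conv d φ (j - m) := by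
        apply tsum_congr
        intro m
        rw [conv, Finset.mul_sum]
        apply Finset.sum_congr rfl
        intro k _
        rw [show j - m - k = j - k - m by ring]
        ring
    _ = ∑' m : ℤ, c (j - m) * conv d φ m := by
        have := (Equiv.subLeft j).tsum_eq (fun m => c m * conv d φ (j - m))
        rw [← this]
        apply tsum_congr
        intro m
        simp [Equiv.subLeft, sub_sub_cancel]

end Aux

/-- If `w` is a symmetric weight and `c`, `d` have finite multiplier norm on `ℓ^p(ℤ,w)`,
then for every `n` the series `e(n) = ∑_k c(k) d(n−k)` converges absolutely, and
`N_{p,w}(e) ≤ N_{p,w}(c) ⬝ N_{p,w}(d)`. -/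


theorem multNorm_submultiplicative (p : ℝ) (hp : 1 < p) (w : ℤ → ℝ)
    (hw : ∀ k, 0 < w k) (hsym : ∀ k : ℤ, w (-k) = w k) (c d : ℤ → ℂ)
    (hc : multNorm p w c ≠ ⊤) (hd : multNorm p w d ≠ ⊤) :
    (∀ n : ℤ, Summable fun k : ℤ => ‖c k * d (n - k)‖) ∧
      multNorm p w (fun n => ∑' k : ℤ, c k * d (n - k)) ≤
        multNorm p w c * multNorm p w d := by
  have hp0 : (0:ℝ) < p := lt_trans one_pos hp
  refine ⟨part1 hp hw hc hd, ?_⟩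
  set e : ℤ → ℂ := fun n => ∑' k : ℤ, c k * d (n - k) with he
  apply iSup_le
  rintro ⟨φ, hφ⟩
  simp only
  rw [ENNReal.div_le_iff_le_mul (Or.inl (wNorm_finsupp_pos hp hw hφ).ne')
    (Or.inl (wNorm_finsupp_ne_top hp φ))]
  set g : ℤ → ℂ := conv d φ with hgdef
  have hgle : wNorm p w g ≤ multNorm p w d * wNorm p w φ := wNorm_conv_le hp hw d φ
  have hgt : wNorm p w g ≠ ⊤ := (lt_of_le_of_lt hgle
    (ENNReal.mul_lt_top hd.lt_top (wNorm_finsupp_ne_top hp φ).lt_top)).ne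
  have hgsum : Summable fun m : ℤ => (‖g m‖ * w m) ^ p := summable_of_wNorm_ne_top hp hw hgt
  -- truncations
  set F : ℕ → Finset ℤ := fun N => Finset.Icc (-(N:ℤ)) N with hF
  set gN : ℕ → (ℤ →₀ ℂ) := fun N => Finsupp.indicator (F N) (fun k _ => g k) with hgNdef
  have hgNzero : ∀ N, ∀ k ∉ F N, (gN N) k = 0 := fun N k hk => Finsupp.indicator_of_notMem hk _
  have hgNsupp : ∀ N, (gN N).support ⊆ F N := by
    intro N k hk
    by_contra h
    exact Finsupp.notMem_support_iff.mpr (hgNzero N k h) hk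
  have hconvN : ∀ N j, conv c (gN N) j = ∑ k ∈ F N, c (j - k) * g k := by
    intro N j
    rw [conv_eq_sum c (gN N) (hgNsupp N) j]
    exact Finset.sum_congr rfl (fun k hk => by rw [Finsupp.indicator_of_mem hk])
  have hFtend : Filter.Tendsto F Filter.atTop Filter.atTop := by
    apply tendsto_atTop_finset_of_monotone
    · intro N M hNM
      apply Finset.Icc_subset_Icc <;> simp <;> exact_mod_cast hNM
    · intro x
      refine ⟨x.natAbs, ?_⟩
      simp only [hF, Finset.mem_Icc, Int.natCast_natAbs]
      exact ⟨neg_abs_le x, le_abs_self x⟩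
  -- pointwise convergence
  have hpt : ∀ j, Filter.Tendsto (fun N => conv c (gN N) j) Filter.atTop (𝓝 (conv e φ j)) := by
    intro j
    have hsum : Summable fun m : ℤ => c (j - m) * g m :=
      (summable_conv_point hp hw hc hgsum j).of_norm
    have heq : conv e φ j = ∑' m : ℤ, c (j - m) * g m := conv_e hp hw hc hd φ j
    rw [heq]
    have h2 := hsum.hasSum.comp hFtend
    refine h2.congr (fun N => ?_)
    exact (hconvN N j).symm
  -- Fatou
  set B : ℝ≥0∞ := multNorm p w c * (multNorm p w d * wNorm p w φ) with hBdef
  have hB : ∀ N, ∑' j : ℤ, ENNReal.ofReal (‖conv c (gN N) j‖ * w j) ^ p ≤ B ^ p := by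
    intro N
    have h2 : wNorm p w (gN N) ≤ wNorm p w g := by
      unfold wNorm
      apply ENNReal.rpow_le_rpow _ (by positivity)
      apply ENNReal.tsum_le_tsum
      intro k
      apply ENNReal.rpow_le_rpow _ hp0.le
      apply ENNReal.ofReal_le_ofReal
      apply mul_le_mul_of_nonneg_right _ (hw k).le
      by_cases hk : k ∈ F N
      · rw [Finsupp.indicator_of_mem hk]
      · rw [hgNzero N k hk]; simp
    have h3 : wNorm p w (conv c (gN N)) ≤ B :=
      (wNorm_conv_le hp hw c (gN N)).trans (mul_le_mul' le_rfl (h2.trans hgle))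
    have h4 : ∑' j : ℤ, ENNReal.ofReal (‖conv c (gN N) j‖ * w j) ^ p
        = wNorm p w (conv c (gN N)) ^ p := by
      rw [wNorm, ← ENNReal.rpow_mul, one_div_mul_cancel hp0.ne', ENNReal.rpow_one]
    rw [h4]
    exact ENNReal.rpow_le_rpow h3 hp0.le
  have hlim : ∀ j, ENNReal.ofReal (‖conv e φ j‖ * w j) ^ p
      = Filter.liminf (fun N => ENNReal.ofReal (‖conv c (gN N) j‖ * w j) ^ p) Filter.atTop := by
    intro j
    symm
    apply Filter.Tendsto.liminf_eq
    have h1 : Filter.Tendsto (fun N => ‖conv c (gN N) j‖ * w j) Filter.atTop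
        (𝓝 (‖conv e φ j‖ * w j)) :=
      ((continuous_norm.tendsto _).comp (hpt j)).mul_const (w j)
    exact ((ENNReal.continuous_rpow_const.comp ENNReal.continuous_ofReal).tendsto _).comp h1
  have fatou : ∑' j : ℤ, ENNReal.ofReal (‖conv e φ j‖ * w j) ^ p ≤ B ^ p := by
    calc ∑' j : ℤ, ENNReal.ofReal (‖conv e φ j‖ * w j) ^ p
        = ∑' j : ℤ, Filter.liminf
            (fun N => ENNReal.ofReal (‖conv c (gN N) j‖ * w j) ^ p) Filter.atTop :=
          tsum_congr hlim
      _ = ∫⁻ j : ℤ, Filter.liminf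
            (fun N => ENNReal.ofReal (‖conv c (gN N) j‖ * w j) ^ p) Filter.atTop
            ∂MeasureTheory.Measure.count :=
          (MeasureTheory.lintegral_count _).symm
      _ ≤ Filter.liminf (fun N => ∫⁻ j : ℤ,
            ENNReal.ofReal (‖conv c (gN N) j‖ * w j) ^ p ∂MeasureTheory.Measure.count)
            Filter.atTop :=
          MeasureTheory.lintegral_liminf_le (fun N => measurable_of_countable _)
      _ = Filter.liminf (fun N => ∑' j : ℤ,
            ENNReal.ofReal (‖conv c (gN N) j‖ * w j) ^ p) Filter.atTop := by
          simp only [MeasureTheory.lintegral_count]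
      _ ≤ Filter.liminf (fun _ : ℕ => B ^ p) Filter.atTop :=
          Filter.liminf_le_liminf (Filter.Eventually.of_forall hB)
      _ = B ^ p := Filter.liminf_const _
  have final : wNorm p w (conv e φ) ≤ B := by
    rw [wNorm]
    calc (∑' j : ℤ, ENNReal.ofReal (‖conv e φ j‖ * w j) ^ p) ^ (1/p)
        ≤ (B ^ p) ^ (1/p) := ENNReal.rpow_le_rpow fatou (by positivity)
      _ = B := by rw [← ENNReal.rpow_mul, mul_one_div_cancel hp0.ne', ENNReal.rpow_one]
  calc wNorm p w (conv e φ) ≤ B := final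
    _ = multNorm p w c * multNorm p w d * wNorm p w φ := by rw [hBdef, mul_assoc]
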